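/- (Herglotz principle with free right endpoint: transversality condition, differentiable case.) Let a < b, z_a ∈ ℝ, and let L : ℝ × ℝ × ℝ × ℝ → ℝ be of class C². Let x : ℝ → ℝ be of class C² and z : ℝ → ℝ be of class C¹ with z'(t) = L(t, x(t), x'(t), z(t)) for all t ∈ [a,b] and z(a) = z_a. Assume that for every C² function η : ℝ → ℝ with η(a) = 0 (η(b) arbitrary) there exists a function Z : ℝ × ℝ → ℝ of class C² such that: Z(0,t) = z(t) for all t ∈ [a,b]; ∂Z/∂t(ε,t) = L(t, x(t)+ε·η(t), x'(t)+ε·η'(t), Z(ε,t)) for all ε ∈ ℝ and t ∈ [a,b]; Z(ε,a) = z_a for all ε ∈ ℝ; and ∂Z/∂ε(0,b) = 0. Then for all t ∈ [a,b]: (d/dt)[∂₃L(t, x(t), x'(t), z(t))] = ∂₂L(t, x(t), x'(t), z(t)) + ∂₄L(t, x(t), x'(t), z(t))·∂₃L(t, x(t), x'(t), z(t)), and moreover the transversality condition ∂₃L(b, x(b), x'(b), z(b)) = 0 holds. -/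

import Mathlib

open Set MeasureTheory intervalIntegral



private lemma fund_aux {a b : ℝ} (hab : a < b) (g : ℝ → ℝ) (hg : Continuous g)
    (hint : ∀ η : ℝ → ℝ, ContDiff ℝ 2 η → η a = 0 → η b = 0 → ∫ t in a..b, g t * η t = 0)
    {t₀ : ℝ} (ht₀ : t₀ ∈ Ioo a b) : ¬ 0 < g t₀ := by
  intro hpos
  obtain ⟨δ, hδpos, hδ⟩ : ∃ δ > 0, Metric.ball t₀ δ ⊆ Ioo a b ∩ {s | g t₀ / 2 < g s} := by
    have h1 : IsOpen (Ioo a b ∩ {s | g t₀ / 2 < g s}) :=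
      isOpen_Ioo.inter (isOpen_lt continuous_const hg)
    exact Metric.isOpen_iff.1 h1 t₀ ⟨ht₀, by simp; linarith⟩
  set φ : ContDiffBump t₀ := ⟨δ/2, δ, by linarith, by linarith⟩ with hφ
  have hsupp : ∀ s, s ∉ Metric.ball t₀ δ → φ s = 0 := by
    intro s hs
    by_contra h
    exact hs (by simpa [φ.support_eq] using Function.mem_support.2 h)
  have hηa : φ a = 0 := hsupp a (fun h => (hδ h).1.1.ne rfl)
  have hηb : φ b = 0 := hsupp b (fun h => (hδ h).1.2.ne rfl)
  have hzero := hint (fun s => φ s) (φ.contDiff (n:=2)) hηa hηb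
  -- positivity
  have hnn : ∀ s, 0 ≤ g s * φ s := by
    intro s
    by_cases h : s ∈ Metric.ball t₀ δ
    · have := (hδ h).2
      have : (0:ℝ) < g s := lt_trans (by linarith) this
      exact mul_nonneg this.le φ.nonneg
    · simp [hsupp s h]
  have hcont : Continuous fun s => g s * φ s := hg.mul (φ.contDiff (n:=2)).continuous
  have hsub1 : a ≤ t₀ - δ/2 := by
    have : t₀ - δ/2 ∈ Metric.ball t₀ δ := by
      simp [Real.ball_eq_Ioo]; constructor <;> linarith
    exact ((hδ this).1.1).le
  have hsub2 : t₀ + δ/2 ≤ b := by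
    have : t₀ + δ/2 ∈ Metric.ball t₀ δ := by
      simp [Real.ball_eq_Ioo]; constructor <;> linarith
    exact ((hδ this).1.2).le
  have hmono : (∫ s in (t₀ - δ/2)..(t₀ + δ/2), g s * φ s) ≤ ∫ s in a..b, g s * φ s := by
    apply integral_mono_interval hsub1 (by linarith) hsub2
    · exact Filter.Eventually.of_forall fun s => hnn s
    · exact (hcont.intervalIntegrable a b)
  have hlow : (g t₀ / 2) * δ ≤ ∫ s in (t₀ - δ/2)..(t₀ + δ/2), g s * φ s := by
    have hconst : (∫ _ in (t₀ - δ/2)..(t₀ + δ/2), g t₀ / 2) = (g t₀ / 2) * δ := by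
      simp; ring
    rw [← hconst]
    apply integral_mono_on (by linarith)
      (intervalIntegrable_const) (hcont.intervalIntegrable _ _)
    intro s hs
    have hmem : s ∈ Metric.ball t₀ δ := by
      rw [Real.ball_eq_Ioo]
      constructor
      · calc t₀ - δ < t₀ - δ/2 := by linarith
          _ ≤ s := hs.1
      · calc s ≤ t₀ + δ/2 := hs.2
          _ < t₀ + δ := by linarith
    have hφ1 : φ s = 1 := φ.one_of_mem_closedBall (by
      rw [Real.closedBall_eq_Icc]
      exact ⟨by simpa using hs.1, by simpa using hs.2⟩)
    rw [hφ1, mul_one]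
    exact ((hδ hmem).2).le
  rw [hzero] at hmono
  nlinarith

private lemma fund {a b : ℝ} (hab : a < b) (g : ℝ → ℝ) (hg : Continuous g)
    (hint : ∀ η : ℝ → ℝ, ContDiff ℝ 2 η → η a = 0 → η b = 0 → ∫ t in a..b, g t * η t = 0) :
    ∀ t ∈ Icc a b, g t = 0 := by
  have hIoo : ∀ t ∈ Ioo a b, g t = 0 := by
    intro t ht
    have h1 := fund_aux hab g hg hint ht
    have h2 := fund_aux hab (fun s => -g s) hg.neg (fun η hη h2 h3 => by
      have := hint η hη h2 h3
      simp only [neg_mul]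
      rw [intervalIntegral.integral_neg, this, neg_zero]) ht
    simp only [Left.nonneg_neg_iff, not_lt] at h1 h2
    linarith
  intro t ht
  have hsub : Icc a b ⊆ closure (Ioo a b) := by rw [closure_Ioo hab.ne]
  have hclosed : Ioo a b ⊆ {s | g s = 0} := hIoo
  have := closure_minimal hclosed (isClosed_eq hg continuous_const)
  exact this (hsub ht)


section helpers

variable {F : ℝ × ℝ × ℝ × ℝ → ℝ}

private lemma slice2 (hF : Differentiable ℝ F) (t u v w : ℝ) :
    deriv (fun y => F (t, y, v, w)) u = fderiv ℝ F (t, u, v, w) (0, 1, 0, 0) := by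
  have hγ : HasDerivAt (fun y : ℝ => ((t, y, v, w) : ℝ × ℝ × ℝ × ℝ))
      ((0, 1, 0, 0) : ℝ × ℝ × ℝ × ℝ) u :=
    (hasDerivAt_const u t).prodMk ((hasDerivAt_id u).prodMk
      ((hasDerivAt_const u v).prodMk (hasDerivAt_const u w)))
  exact ((hF _).hasFDerivAt.comp_hasDerivAt u hγ).deriv

private lemma slice3 (hF : Differentiable ℝ F) (t u v w : ℝ) :
    deriv (fun v' => F (t, u, v', w)) v = fderiv ℝ F (t, u, v, w) (0, 0, 1, 0) := by
  have hγ : HasDerivAt (fun v' : ℝ => ((t, u, v', w) : ℝ × ℝ × ℝ × ℝ))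
      ((0, 0, 1, 0) : ℝ × ℝ × ℝ × ℝ) v :=
    (hasDerivAt_const v t).prodMk ((hasDerivAt_const v u).prodMk
      ((hasDerivAt_id v).prodMk (hasDerivAt_const v w)))
  exact ((hF _).hasFDerivAt.comp_hasDerivAt v hγ).deriv

private lemma slice4 (hF : Differentiable ℝ F) (t u v w : ℝ) :
    deriv (fun w' => F (t, u, v, w')) w = fderiv ℝ F (t, u, v, w) (0, 0, 0, 1) := by
  have hγ : HasDerivAt (fun w' : ℝ => ((t, u, v, w') : ℝ × ℝ × ℝ × ℝ))
      ((0, 0, 0, 1) : ℝ × ℝ × ℝ × ℝ) w :=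
    (hasDerivAt_const w t).prodMk ((hasDerivAt_const w u).prodMk
      ((hasDerivAt_const w v).prodMk (hasDerivAt_id w)))
  exact ((hF _).hasFDerivAt.comp_hasDerivAt w hγ).deriv

private lemma fdecomp (φ : (ℝ × ℝ × ℝ × ℝ) →L[ℝ] ℝ) (α β γ : ℝ) :
    φ (0, α, β, γ) = α * φ (0, 1, 0, 0) + β * φ (0, 0, 1, 0) + γ * φ (0, 0, 0, 1) := by
  have h : ((0, α, β, γ) : ℝ × ℝ × ℝ × ℝ)
      = α • ((0, 1, 0, 0) : ℝ × ℝ × ℝ × ℝ) + β • (0, 0, 1, 0) + γ • (0, 0, 0, 1) := by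
    simp [Prod.ext_iff]
  rw [h, map_add, map_add, _root_.map_smul, _root_.map_smul, _root_.map_smul]
  simp [smul_eq_mul]

-- slices for two-variable functions
private lemma slice1of2 (W : ℝ × ℝ → ℝ) (hW : Differentiable ℝ W) (ε t : ℝ) :
    deriv (fun ε' => W (ε', t)) ε = fderiv ℝ W (ε, t) (1, 0) := by
  have hγ : HasDerivAt (fun ε' : ℝ => ((ε', t) : ℝ × ℝ)) ((1, 0) : ℝ × ℝ) ε :=
    (hasDerivAt_id ε).prodMk (hasDerivAt_const ε t)
  exact ((hW _).hasFDerivAt.comp_hasDerivAt ε hγ).deriv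

private lemma slice2of2 (W : ℝ × ℝ → ℝ) (hW : Differentiable ℝ W) (ε t : ℝ) :
    deriv (fun s => W (ε, s)) t = fderiv ℝ W (ε, t) (0, 1) := by
  have hγ : HasDerivAt (fun s : ℝ => ((ε, s) : ℝ × ℝ)) ((0, 1) : ℝ × ℝ) t :=
    (hasDerivAt_const t ε).prodMk (hasDerivAt_id t)
  exact ((hW _).hasFDerivAt.comp_hasDerivAt t hγ).deriv

end helpers


set_option maxHeartbeats 1000000 in
/-- Herglotz principle with free right endpoint (differentiable case): under the same
assumptions as the fixed-endpoint problem but with variations only required to vanish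
at `t = a`, the Herglotz–Euler–Lagrange equation holds on `[a,b]` together with the
transversality condition `∂₃L(b, x(b), x'(b), z(b)) = 0`. -/
theorem stmt_12 (a b z_a : ℝ) (hab : a < b)
    (L : ℝ → ℝ → ℝ → ℝ → ℝ)
    (hL : ContDiff ℝ 2 (fun p : ℝ × ℝ × ℝ × ℝ => L p.1 p.2.1 p.2.2.1 p.2.2.2))
    (x z : ℝ → ℝ) (hx : ContDiff ℝ 2 x) (hz : ContDiff ℝ 1 z)
    (hzeq : ∀ t ∈ Set.Icc a b, deriv z t = L t (x t) (deriv x t) (z t))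
    (hza : z a = z_a)
    (hvar : ∀ η : ℝ → ℝ, ContDiff ℝ 2 η → η a = 0 →
      ∃ Z : ℝ → ℝ → ℝ,
        ContDiff ℝ 2 (fun p : ℝ × ℝ => Z p.1 p.2) ∧
        (∀ t ∈ Set.Icc a b, Z 0 t = z t) ∧
        (∀ ε : ℝ, ∀ t ∈ Set.Icc a b,
          deriv (fun s => Z ε s) t
            = L t (x t + ε * η t) (deriv x t + ε * deriv η t) (Z ε t)) ∧
        (∀ ε : ℝ, Z ε a = z_a) ∧
        deriv (fun ε => Z ε b) 0 = 0) :
    (∀ t ∈ Set.Icc a b,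
      deriv (fun s => deriv (fun v => L s (x s) v (z s)) (deriv x s)) t
        = deriv (fun y => L t y (deriv x t) (z t)) (x t)
          + deriv (fun w => L t (x t) (deriv x t) w) (z t)
            * deriv (fun v => L t (x t) v (z t)) (deriv x t)) ∧
    deriv (fun v => L b (x b) v (z b)) (deriv x b) = 0 := by
  have hFd : Differentiable ℝ (fun p : ℝ × ℝ × ℝ × ℝ => L p.1 p.2.1 p.2.2.1 p.2.2.2) :=
    hL.differentiable (by norm_num)
  set F := fun p : ℝ × ℝ × ℝ × ℝ => L p.1 p.2.1 p.2.2.1 p.2.2.2 with hFdef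
  have hFf : ContDiff ℝ 1 (fderiv ℝ F) := hL.fderiv_right (by norm_num)
  have h21 : (2 : WithTop ℕ∞) = 1 + 1 := by norm_num
  have hx' : ContDiff ℝ 1 (deriv x) := (contDiff_succ_iff_deriv.mp (h21 ▸ hx)).2.2
  set c : ℝ → ℝ × ℝ × ℝ × ℝ := fun t => (t, x t, deriv x t, z t) with hcdef
  have hc : ContDiff ℝ 1 c := contDiff_id.prodMk ((hx.of_le one_le_two).prodMk (hx'.prodMk hz))
  set p := fun t => fderiv ℝ F (c t) (0, 0, 1, 0) with hpdef
  set q := fun t => fderiv ℝ F (c t) (0, 1, 0, 0) with hqdef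
  set r := fun t => fderiv ℝ F (c t) (0, 0, 0, 1) with hrdef
  have hp1 : ContDiff ℝ 1 p := (hFf.comp hc).clm_apply contDiff_const
  have hpc : Continuous p := hp1.continuous
  have hqc : Continuous q := (((hFf.comp hc).clm_apply contDiff_const) : ContDiff ℝ 1 q).continuous
  have hrc : Continuous r := (((hFf.comp hc).clm_apply contDiff_const) : ContDiff ℝ 1 r).continuous
  have hp'c : Continuous (deriv p) := hp1.continuous_deriv le_rfl
  -- integrating factor
  set R := fun t => Real.exp (-∫ s in a..t, r s) with hRdef
  have hRd : ∀ t, HasDerivAt R (-r t * R t) t := by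
    intro t
    have h1 : HasDerivAt (fun u => ∫ s in a..u, r s) (r t) t :=
      intervalIntegral.integral_hasDerivAt_right (hrc.intervalIntegrable a t)
        (hrc.stronglyMeasurableAtFilter volume (nhds t)) hrc.continuousAt
    have := (h1.neg).exp
    exact this.congr_deriv (mul_comm _ _)
  have hRc : Continuous R := continuous_iff_continuousAt.2 fun t => (hRd t).continuousAt
  have hRpos : ∀ t, 0 < R t := fun t => Real.exp_pos _
  set g := fun t => R t * (q t + r t * p t - deriv p t) with hgdef
  have hgc : Continuous g := hRc.mul (((hqc.add (hrc.mul hpc)).sub hp'c))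
  -- the key variational identity
  have key : ∀ η : ℝ → ℝ, ContDiff ℝ 2 η → η a = 0 →
      ∫ t in a..b, g t * η t = -(R b * p b * η b) := by
    intro η hη hηa0
    obtain ⟨Z, hW2, hZ0, hZode, hZa, hZb⟩ := hvar η hη hηa0
    set W := fun pr : ℝ × ℝ => Z pr.1 pr.2 with hWdef
    have hWd : Differentiable ℝ W := hW2.differentiable (by norm_num)
    have hWf : ContDiff ℝ 1 (fderiv ℝ W) := hW2.fderiv_right (by norm_num)
    have hWfd : Differentiable ℝ (fderiv ℝ W) := hWf.differentiable (by norm_num)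
    set ψ := fun s : ℝ => fderiv ℝ W (0, s) ((1 : ℝ), (0 : ℝ)) with hψdef
    have hψc : Continuous ψ :=
      (((hWf.comp (contDiff_const.prodMk contDiff_id)).clm_apply contDiff_const) :
        ContDiff ℝ 1 ψ).continuous
    have hψeq : ∀ s, deriv (fun ε => Z ε s) 0 = ψ s := fun s => slice1of2 W hWd 0 s
    have hψa : ψ a = 0 := by
      rw [← hψeq a]
      have : (fun ε => Z ε a) = fun _ => z_a := funext hZa
      rw [this, deriv_const]
    have hψb : ψ b = 0 := by rw [← hψeq b]; exact hZb
    have hψd : ∀ t ∈ Icc a b, HasDerivAt ψ (q t * η t + p t * deriv η t + r t * ψ t) t := by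
      intro t ht
      have hγ1 : HasDerivAt (fun s : ℝ => (((0 : ℝ), s) : ℝ × ℝ)) (((0 : ℝ), (1 : ℝ)) : ℝ × ℝ) t :=
        (hasDerivAt_const t (0 : ℝ)).prodMk (hasDerivAt_id t)
      have h1 : HasDerivAt (fun s : ℝ => fderiv ℝ W (0, s))
          (fderiv ℝ (fderiv ℝ W) (0, t) ((0 : ℝ), (1 : ℝ))) t :=
        (hWfd (0, t)).hasFDerivAt.comp_hasDerivAt t hγ1
      have h2 : HasDerivAt ψ (fderiv ℝ (fderiv ℝ W) (0, t) ((0 : ℝ), (1 : ℝ)) ((1 : ℝ), (0 : ℝ))) t := by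
        have := h1.clm_apply (hasDerivAt_const t (((1 : ℝ), (0 : ℝ)) : ℝ × ℝ))
        simpa using this
      have hsym := (hW2.contDiffAt (x := (((0:ℝ), t) : ℝ × ℝ))).isSymmSndFDerivAt (n := 2) (by simp [minSmoothness_of_isRCLikeNormedField])
      have hγ2 : HasDerivAt (fun ε : ℝ => ((ε, t) : ℝ × ℝ)) (((1 : ℝ), (0 : ℝ)) : ℝ × ℝ) 0 :=
        (hasDerivAt_id 0).prodMk (hasDerivAt_const 0 t)
      have h3 : HasDerivAt (fun ε : ℝ => fderiv ℝ W (ε, t) ((0 : ℝ), (1 : ℝ)))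
          (fderiv ℝ (fderiv ℝ W) (0, t) ((1 : ℝ), (0 : ℝ)) ((0 : ℝ), (1 : ℝ))) 0 := by
        have := ((hWfd (0, t)).hasFDerivAt.comp_hasDerivAt 0 hγ2).clm_apply
          (hasDerivAt_const 0 (((0 : ℝ), (1 : ℝ)) : ℝ × ℝ))
        simpa using this
      have hfun : (fun ε : ℝ => fderiv ℝ W (ε, t) ((0 : ℝ), (1 : ℝ)))
          = fun ε => F (t, x t + ε * η t, deriv x t + ε * deriv η t, Z ε t) := by
        funext ε
        rw [← slice2of2 W hWd ε t]
        exact hZode ε t ht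
      have hZt : HasDerivAt (fun ε => Z ε t) (ψ t) 0 :=
        by have h := (hWd (0, t)).hasFDerivAt.comp_hasDerivAt 0 hγ2; exact h
      have hcurve : HasDerivAt
          (fun ε : ℝ => ((t, x t + ε * η t, deriv x t + ε * deriv η t, Z ε t) : ℝ × ℝ × ℝ × ℝ))
          ((0, η t, deriv η t, ψ t) : ℝ × ℝ × ℝ × ℝ) 0 := by
        refine (hasDerivAt_const 0 t).prodMk (HasDerivAt.prodMk ?_ (HasDerivAt.prodMk ?_ hZt))
        · simpa using ((hasDerivAt_id (0 : ℝ)).mul_const (η t)).const_add (x t)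
        · simpa using ((hasDerivAt_id (0 : ℝ)).mul_const (deriv η t)).const_add (deriv x t)
      have hγ0 : ((t, x t + 0 * η t, deriv x t + 0 * deriv η t, Z 0 t) : ℝ × ℝ × ℝ × ℝ) = c t := by
        simp [hcdef, hZ0 t ht]
      have h4 : HasDerivAt (fun ε => F (t, x t + ε * η t, deriv x t + ε * deriv η t, Z ε t))
          (fderiv ℝ F (c t) (0, η t, deriv η t, ψ t)) 0 := by
        have h := (hFd ((t, x t + 0 * η t, deriv x t + 0 * deriv η t, Z 0 t) :
          ℝ × ℝ × ℝ × ℝ)).hasFDerivAt.comp_hasDerivAt 0 hcurve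
        rw [hγ0] at h
        exact h
      have h5 : fderiv ℝ (fderiv ℝ W) (0, t) ((1 : ℝ), (0 : ℝ)) ((0 : ℝ), (1 : ℝ))
          = fderiv ℝ F (c t) (0, η t, deriv η t, ψ t) := by
        rw [hfun] at h3
        exact h3.unique h4
      have h6 : fderiv ℝ (fderiv ℝ W) (0, t) ((0 : ℝ), (1 : ℝ)) ((1 : ℝ), (0 : ℝ))
          = q t * η t + p t * deriv η t + r t * ψ t := by
        rw [hsym ((0 : ℝ), (1 : ℝ)) ((1 : ℝ), (0 : ℝ)), h5, fdecomp]
        simp only [hpdef, hqdef, hrdef]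
        ring
      rw [h6] at h2
      exact h2
    -- the integrated identity
    have hGd : ∀ t ∈ Icc a b,
        HasDerivAt (fun t => R t * ψ t) (R t * (q t * η t) + (R t * p t) * deriv η t) t := by
      intro t ht
      have := (hRd t).mul (hψd t ht)
      exact this.congr_deriv (by ring)
    have hint1 : Continuous fun t => R t * (q t * η t) := hRc.mul (hqc.mul hη.continuous)
    have hηd : Continuous (deriv η) := hη.continuous_deriv one_le_two
    have hint2 : Continuous fun t => (R t * p t) * deriv η t := (hRc.mul hpc).mul hηd
    have hFTC : (∫ t in a..b, (R t * (q t * η t) + (R t * p t) * deriv η t)) = 0 := by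
      rw [intervalIntegral.integral_eq_sub_of_hasDerivAt (f := fun t => R t * ψ t)
        (fun t ht => hGd t (by rwa [uIcc_of_le hab.le] at ht))
        (((hint1.add hint2)).intervalIntegrable a b)]
      simp [hψa, hψb]
    rw [intervalIntegral.integral_add (hint1.intervalIntegrable a b)
      (hint2.intervalIntegrable a b)] at hFTC
    -- integration by parts
    have hu : ∀ t ∈ uIcc a b,
        HasDerivAt (fun t => R t * p t) (-r t * R t * p t + R t * deriv p t) t := by
      intro t _
      have := (hRd t).mul ((hp1.differentiable (by norm_num) t).hasDerivAt)
      exact this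
    have hu'c : Continuous fun t => -r t * R t * p t + R t * deriv p t :=
      ((hrc.neg.mul hRc).mul hpc).add (hRc.mul hp'c)
    have hIBP := intervalIntegral.integral_mul_deriv_eq_deriv_mul hu
      (fun t _ => (hη.differentiable (by norm_num) t).hasDerivAt)
      (hu'c.intervalIntegrable a b) (hηd.intervalIntegrable a b)
    -- combine
    have hgη : (fun t => g t * η t)
        = fun t => R t * (q t * η t) - ((-r t * R t * p t + R t * deriv p t) * η t) := by
      funext t
      simp only [hgdef]
      ring
    rw [hgη, intervalIntegral.integral_sub (hint1.intervalIntegrable a b)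
      ((hu'c.mul hη.continuous).intervalIntegrable a b) (g := fun t => (-r t * R t * p t + R t * deriv p t) * η t)]
    rw [hηa0] at hIBP
    have hIBP' : (∫ t in a..b, (-r t * R t * p t + R t * deriv p t) * η t)
        = R b * p b * η b - ∫ t in a..b, (R t * p t) * deriv η t := by
      linarith [hIBP]
    rw [hIBP']
    linarith [hFTC]
  -- fundamental lemma
  have hg0 : ∀ t ∈ Icc a b, g t = 0 := by
    apply fund hab g hgc
    intro η hη h2 h3
    rw [key η hη h2, h3, mul_zero, neg_zero]
  have pb0 : p b = 0 := by
    have h := key (fun t => t - a) (contDiff_id.sub contDiff_const) (by simp)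
    have hLHS : (∫ t in a..b, g t * (t - a)) = 0 := by
      rw [intervalIntegral.integral_congr (g := fun _ => (0 : ℝ))
        (fun t ht => by rw [hg0 t (by rwa [uIcc_of_le hab.le] at ht)]; ring)]
      simp
    rw [hLHS] at h
    have hb0 : R b * p b * (b - a) = 0 := by
      linarith
    have h1 : R b ≠ 0 := (hRpos b).ne'
    have h2 : b - a ≠ 0 := by linarith
    rcases mul_eq_zero.1 hb0 with h | h
    · rcases mul_eq_zero.1 h with h' | h'
      · exact absurd h' h1
      · exact h'
    · exact absurd h h2
  constructor
  · intro t ht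
    have hgt := hg0 t ht
    have hEL : deriv p t = q t + r t * p t := by
      have hR := (hRpos t).ne'
      simp only [hgdef] at hgt
      rcases mul_eq_zero.1 hgt with h | h
      · exact absurd h hR
      · linarith
    have hfun : (fun s => deriv (fun v => L s (x s) v (z s)) (deriv x s)) = p := by
      funext s
      exact slice3 hFd s (x s) (deriv x s) (z s)
    rw [hfun, hEL, slice2 hFd t (x t) (deriv x t) (z t), slice3 hFd t (x t) (deriv x t) (z t),
      slice4 hFd t (x t) (deriv x t) (z t)]
  · rw [slice3 hFd b (x b) (deriv x b) (z b)]
    simpa only [hpdef, hcdef] using pb0
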